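/- Let (X,d) be an ultrametric space. Then d̂ is a well-defined ultrametric on J_ω(X): for all μ, ν, τ ∈ J_ω(X), d̂(μ,ν) is a finite nonnegative real number, d̂(μ,ν) = 0 if and only if μ = ν, d̂(μ,ν) = d̂(ν,μ), and d̂(μ,ν) ≤ max{d̂(μ,τ), d̂(τ,ν)}. -/

import Mathlib

open scoped ENNReal

noncomputable section

/-- A metric is an *ultrametric* if the strong triangle inequality holds. -/
def IsUltra (X : Type*) [MetricSpace X] : Prop :=
  ∀ x y z : X, dist x y ≤ max (dist x z) (dist z y)

/-- `mmOf x α` is the max-min functional `∨ᵢ αᵢ ∧ δ_{x i}`,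
`φ ↦ maxᵢ min (α i) (φ (x i))` (computed in the extended reals). -/
def mmOf {A : Type*} {n : ℕ} (x : Fin (n + 1) → A) (α : Fin (n + 1) → EReal) :
    (A → ℝ) → ℝ :=
  fun φ => (⨆ i, min (α i) ((φ (x i) : EReal))).toReal

/-- `μ` is a max-min measure of finite support, with support contained in `S`. -/
def IsMMOn {A : Type*} (S : Set A) (μ : (A → ℝ) → ℝ) : Prop :=
  ∃ (n : ℕ) (x : Fin (n + 1) → A) (α : Fin (n + 1) → EReal),
    (∀ i, x i ∈ S) ∧ (∃ i, α i = ⊤) ∧ μ = mmOf x α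

/-- `μ` is a max-min measure of finite support. -/
def IsMM {A : Type*} (μ : (A → ℝ) → ℝ) : Prop :=
  IsMMOn Set.univ μ

/-- `idemOf x α` is the idempotent measure `∨ᵢ αᵢ ⊙ δ_{x i}`,
`φ ↦ maxᵢ (α i + φ (x i))` (computed in the extended reals). -/
def idemOf {A : Type*} {n : ℕ} (x : Fin (n + 1) → A) (α : Fin (n + 1) → EReal) :
    (A → ℝ) → ℝ :=
  fun φ => (⨆ i, (α i + (φ (x i) : EReal))).toReal

/-- `μ` is an idempotent measure of finite support, with support contained in `S`. -/
def IsIdemOn {A : Type*} (S : Set A) (μ : (A → ℝ) → ℝ) : Prop :=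
  ∃ (n : ℕ) (x : Fin (n + 1) → A) (α : Fin (n + 1) → EReal),
    (∀ i, x i ∈ S) ∧ (∀ i, α i ≤ 0) ∧ (∃ i, α i = 0) ∧ μ = idemOf x α

/-- `μ` is an idempotent measure of finite support. -/
def IsIdem {A : Type*} (μ : (A → ℝ) → ℝ) : Prop :=
  IsIdemOn Set.univ μ

/-- The Dirac measure `δ_a`. -/
def dirac {A : Type*} (a : A) : (A → ℝ) → ℝ := fun φ => φ a

/-- `FrE e r φ`: the function `φ` is constant on every open `r`-ball of the
(extended-valued) distance `e`; this is the family `𝓕_r`. -/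
def FrE {A : Type*} (e : A → A → ℝ≥0∞) (r : ℝ≥0∞) (φ : A → ℝ) : Prop :=
  ∀ x y : A, e x y < r → φ x = φ y

/-- The ultrametric `d̂` on functionals:
`d̂(μ,ν) = inf {r > 0 ∣ μ φ = ν φ for every φ ∈ 𝓕_r}`. -/
def dHatE {A : Type*} (e : A → A → ℝ≥0∞) (μ ν : (A → ℝ) → ℝ) : ℝ≥0∞ :=
  sInf {r : ℝ≥0∞ | 0 < r ∧ ∀ φ : A → ℝ, FrE e r φ → μ φ = ν φ}

/-- The pushforward `J_ω(f)` of functionals along `f`. -/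
def Jmap {A B : Type*} (f : A → B) (μ : (A → ℝ) → ℝ) : (B → ℝ) → ℝ :=
  fun φ => μ (φ ∘ f)

/-- The extended distance of a metric space, as a two-variable function. -/
def eD (X : Type*) [PseudoEMetricSpace X] : X → X → ℝ≥0∞ :=
  fun x y => edist x y

/-- The monad multiplication (`ξ` for max-min measures, `ζ` for idempotent
measures): `mult M φ = M (μ ↦ μ φ)`. -/
def mult {A : Type*} (M : (((A → ℝ) → ℝ) → ℝ) → ℝ) : (A → ℝ) → ℝ :=
  fun φ => M fun μ => μ φ



section DHatAux

lemma aux_ultraE {X : Type*} [MetricSpace X] (hX : IsUltra X) (a b c : X) :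
    edist a b ≤ max (edist a c) (edist c b) := by
  rw [edist_dist, edist_dist, edist_dist]
  calc ENNReal.ofReal (dist a b) ≤ ENNReal.ofReal (max (dist a c) (dist c b)) :=
        ENNReal.ofReal_le_ofReal (hX a b c)
    _ = max (ENNReal.ofReal (dist a c)) (ENNReal.ofReal (dist c b)) :=
        Monotone.map_max (fun _ _ h => ENNReal.ofReal_le_ofReal h)

lemma aux_frE_anti {A : Type*} (e : A → A → ℝ≥0∞) {r s : ℝ≥0∞} (hsr : s ≤ r)
    {φ : A → ℝ} (h : FrE e r φ) : FrE e s φ :=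
  fun x y hxy => h x y (lt_of_lt_of_le hxy hsr)

lemma aux_mmOf_const {A : Type*} {n : ℕ} (x : Fin (n+1) → A) (α : Fin (n+1) → EReal)
    (htop : ∃ i, α i = ⊤) {φ : A → ℝ} {c : ℝ} (h : ∀ i, φ (x i) = c) :
    mmOf x α φ = c := by
  unfold mmOf
  have : (⨆ i, min (α i) ((φ (x i) : EReal))) = (c : EReal) := by
    apply le_antisymm
    · exact iSup_le fun i => by rw [h i]; exact min_le_right _ _
    · obtain ⟨i₀, hi⟩ := htop
      refine le_iSup_of_le i₀ ?_
      rw [hi, h i₀, min_eq_right le_top]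
  rw [this, EReal.toReal_coe]

lemma aux_mmOf_congr {A : Type*} {n : ℕ} (x : Fin (n+1) → A) (α : Fin (n+1) → EReal)
    {φ ψ : A → ℝ} (h : ∀ i, φ (x i) = ψ (x i)) : mmOf x α φ = mmOf x α ψ := by
  unfold mmOf
  congr 1
  exact iSup_congr fun i => by rw [h i]

lemma aux_dHat_comm {A : Type*} (e : A → A → ℝ≥0∞) (μ ν : (A → ℝ) → ℝ) :
    dHatE e μ ν = dHatE e ν μ := by
  unfold dHatE
  congr 1
  ext r
  exact ⟨fun h => ⟨h.1, fun φ hφ => (h.2 φ hφ).symm⟩,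
    fun h => ⟨h.1, fun φ hφ => (h.2 φ hφ).symm⟩⟩

lemma aux_dHat_self {A : Type*} (e : A → A → ℝ≥0∞) (μ : (A → ℝ) → ℝ) :
    dHatE e μ μ = 0 := by
  refine le_antisymm ?_ zero_le
  exact le_of_forall_gt_imp_ge_of_dense fun ε hε => sInf_le ⟨hε, fun _ _ => rfl⟩

lemma aux_dHat_triangle {A : Type*} (e : A → A → ℝ≥0∞) (μ ν τ : (A → ℝ) → ℝ) :
    dHatE e μ ν ≤ max (dHatE e μ τ) (dHatE e τ ν) := by
  refine le_of_forall_gt_imp_ge_of_dense fun r hr => ?_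
  rw [max_lt_iff] at hr
  obtain ⟨s₁, hs₁, h1⟩ := sInf_lt_iff.mp hr.1
  obtain ⟨s₂, hs₂, h2⟩ := sInf_lt_iff.mp hr.2
  refine sInf_le ⟨hs₁.1.trans h1, fun φ hφ => ?_⟩
  exact (hs₁.2 φ (aux_frE_anti e h1.le hφ)).trans (hs₂.2 φ (aux_frE_anti e h2.le hφ))

lemma aux_dHat_lt_top {X : Type*} [MetricSpace X] {μ ν : (X → ℝ) → ℝ}
    (hμ : IsMM μ) (hν : IsMM ν) : dHatE (eD X) μ ν < ⊤ := by
  obtain ⟨n, x, α, -, hαtop, rfl⟩ := hμ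
  obtain ⟨m, y, β, -, hβtop, rfl⟩ := hν
  set R : ℝ≥0∞ := (Finset.univ.sup fun i => edist (x 0) (x i)) ⊔
      (Finset.univ.sup fun j => edist (x 0) (y j)) with hR
  have hRtop : R < ⊤ := by
    rw [hR]
    refine sup_lt_iff.mpr ⟨?_, ?_⟩ <;>
      exact (Finset.sup_lt_iff (by simp : (⊥ : ℝ≥0∞) < ⊤)).mpr
        (fun b _ => edist_lt_top _ _)
  have hRr : R < R + 1 := ENNReal.lt_add_right hRtop.ne one_ne_zero
  have hrtop : R + 1 < ⊤ := ENNReal.add_lt_top.mpr ⟨hRtop, ENNReal.one_lt_top⟩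
  refine lt_of_le_of_lt (sInf_le ⟨?_, ?_⟩) hrtop
  · exact lt_of_lt_of_le zero_lt_one le_add_self
  · intro φ hφ
    have hx : ∀ i, φ (x i) = φ (x 0) := by
      intro i
      have h1 : edist (x 0) (x i) ≤ R :=
        le_trans (Finset.le_sup (f := fun i => edist (x 0) (x i)) (Finset.mem_univ i))
          le_sup_left
      exact (hφ (x 0) (x i) (lt_of_le_of_lt h1 hRr)).symm
    have hy : ∀ j, φ (y j) = φ (x 0) := by
      intro j
      have h1 : edist (x 0) (y j) ≤ R :=
        le_trans (Finset.le_sup (f := fun j => edist (x 0) (y j)) (Finset.mem_univ j))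
          le_sup_right
      exact (hφ (x 0) (y j) (lt_of_le_of_lt h1 hRr)).symm
    rw [aux_mmOf_const x α hαtop hx, aux_mmOf_const y β hβtop hy]

lemma aux_eq_of_dHat_zero {X : Type*} [MetricSpace X] (hX : IsUltra X)
    {μ ν : (X → ℝ) → ℝ} (hμ : IsMM μ) (hν : IsMM ν)
    (h0 : dHatE (eD X) μ ν = 0) : μ = ν := by
  classical
  obtain ⟨n, x, α, -, hαtop, rfl⟩ := hμ
  obtain ⟨m, y, β, -, hβtop, rfl⟩ := hν
  funext φ
  set P : Finset X := Finset.univ.image x ∪ Finset.univ.image y with hP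
  set r0 : ℝ≥0∞ := ((P ×ˢ P).filter fun pq => edist pq.1 pq.2 ≠ 0).inf
      (fun pq => edist pq.1 pq.2) with hr0
  have hr0pos : 0 < r0 := by
    rw [hr0]
    refine (Finset.lt_inf_iff (by simp : (0:ℝ≥0∞) < ⊤)).mpr ?_
    intro pq hpq
    rw [Finset.mem_filter] at hpq
    exact pos_iff_ne_zero.mpr hpq.2
  have hsep : ∀ p ∈ P, ∀ q ∈ P, edist p q < r0 → p = q := by
    intro p hp q hq hlt
    by_contra hne
    have hne0 : edist p q ≠ 0 := fun h => hne (edist_eq_zero.mp h)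
    have : r0 ≤ edist p q := by
      rw [hr0]
      have hmem : (p, q) ∈ (P ×ˢ P).filter fun pq => edist pq.1 pq.2 ≠ 0 := by
        rw [Finset.mem_filter]
        exact ⟨Finset.mem_product.mpr ⟨hp, hq⟩, hne0⟩
      exact Finset.inf_le (f := fun pq => edist pq.1 pq.2) hmem
    exact absurd hlt (not_lt.mpr this)
  set ψ : X → ℝ := fun a => if h : ∃ p, p ∈ P ∧ edist a p < r0 then φ h.choose else 0
    with hψ
  have htrans : ∀ a b : X, edist a b < r0 →
      (∃ p, p ∈ P ∧ edist a p < r0) → (∃ p, p ∈ P ∧ edist b p < r0) := by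
    rintro a b hab ⟨p, hp, hap⟩
    refine ⟨p, hp, ?_⟩
    calc edist b p ≤ max (edist b a) (edist a p) := aux_ultraE hX _ _ _
      _ < r0 := max_lt (by rwa [edist_comm]) hap
  have hψF : FrE (eD X) r0 ψ := by
    intro a b hab
    by_cases ha : ∃ p, p ∈ P ∧ edist a p < r0
    · have hb : ∃ p, p ∈ P ∧ edist b p < r0 := htrans a b hab ha
      rw [hψ]
      dsimp only
      rw [dif_pos ha, dif_pos hb]
      obtain ⟨hpa, hapa⟩ := ha.choose_spec
      obtain ⟨hpb, hbpb⟩ := hb.choose_spec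
      have hlt : edist ha.choose hb.choose < r0 := by
        calc edist ha.choose hb.choose
            ≤ max (edist ha.choose a) (edist a hb.choose) := aux_ultraE hX _ _ _
          _ < r0 := by
            refine max_lt (by rwa [edist_comm]) ?_
            calc edist a hb.choose ≤ max (edist a b) (edist b hb.choose) :=
                  aux_ultraE hX _ _ _
              _ < r0 := max_lt hab hbpb
      rw [hsep _ hpa _ hpb hlt]
    · have hb : ¬ ∃ p, p ∈ P ∧ edist b p < r0 :=
        fun hb => ha (htrans b a (by rwa [edist_comm]) hb)
      rw [hψ]
      dsimp only
      rw [dif_neg ha, dif_neg hb]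
  have hψeq : ∀ p ∈ P, ψ p = φ p := by
    intro p hp
    have hex : ∃ q, q ∈ P ∧ edist p q < r0 := ⟨p, hp, by simpa using hr0pos⟩
    rw [hψ]
    dsimp only
    rw [dif_pos hex]
    obtain ⟨hq, hpq⟩ := hex.choose_spec
    exact congrArg φ (hsep _ hp _ hq hpq).symm
  have hlt : dHatE (eD X) (mmOf x α) (mmOf y β) < r0 := by rw [h0]; exact hr0pos
  obtain ⟨s, hsmem, hs⟩ := sInf_lt_iff.mp hlt
  have key := hsmem.2 ψ (aux_frE_anti _ hs.le hψF)
  have hx' : ∀ i, φ (x i) = ψ (x i) := fun i =>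
    (hψeq _ (Finset.mem_union_left _ (Finset.mem_image_of_mem x (Finset.mem_univ i)))).symm
  have hy' : ∀ j, φ (y j) = ψ (y j) := fun j =>
    (hψeq _ (Finset.mem_union_right _ (Finset.mem_image_of_mem y (Finset.mem_univ j)))).symm
  calc mmOf x α φ = mmOf x α ψ := aux_mmOf_congr x α hx'
    _ = mmOf y β ψ := key
    _ = mmOf y β φ := (aux_mmOf_congr y β hy').symm

end DHatAux

/-- For an ultrametric space `(X,d)`, `d̂` is a well-defined
ultrametric on `J_ω(X)`: it is finite (hence, being an element of `ℝ≥0∞`, a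
nonnegative real number), vanishes exactly on the diagonal, is symmetric and
satisfies the strong triangle inequality. -/
theorem dHat_is_ultrametric {X : Type*} [MetricSpace X] (hX : IsUltra X)
    (μ ν τ : (X → ℝ) → ℝ) (hμ : IsMM μ) (hν : IsMM ν) (hτ : IsMM τ) :
    dHatE (eD X) μ ν < ⊤ ∧
    (dHatE (eD X) μ ν = 0 ↔ μ = ν) ∧
    dHatE (eD X) μ ν = dHatE (eD X) ν μ ∧
    dHatE (eD X) μ ν ≤ max (dHatE (eD X) μ τ) (dHatE (eD X) τ ν) := by
  exact ⟨aux_dHat_lt_top hμ hν,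
    ⟨fun h0 => aux_eq_of_dHat_zero hX hμ hν h0, fun h => h ▸ aux_dHat_self _ _⟩,
    aux_dHat_comm _ _ _, aux_dHat_triangle _ _ _ _⟩

end
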